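/- Let x₁,…,x₅, p₁,…,p₅ ∈ ℂ satisfy the null-cone condition x₁² + x₂² + x₃² + x₄² + x₅² = 0 and the restriction x₁p₁ + x₂p₂ + x₃p₃ + x₄p₄ + x₅p₅ = 0. Define p_x = −(x₄ + i x₅) p₁ + x₁ (p₄ + i p₅), p_y = −(x₄ + i x₅) p₂ + x₂ (p₄ + i p₅), p_z = −(x₄ + i x₅) p₃ + x₃ (p₄ + i p₅). Then the free Hamiltonian satisfies p_x² + p_y² + p_z² = (x₄ + i x₅)² (p₁² + p₂² + p₃² + p₄² + p₅²). -/
import Mathlib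


/-- On the null cone `Σ xₖ² = 0` with the restriction `Σ xₖpₖ = 0`, the flat
free Hamiltonian satisfies
`p_x² + p_y² + p_z² = (x₄+ix₅)²(p₁²+p₂²+p₃²+p₄²+p₅²)`. -/
theorem pentaspherical_free_hamiltonian
    (x1 x2 x3 x4 x5 p1 p2 p3 p4 p5 : ℂ)
    (hcone : x1 ^ 2 + x2 ^ 2 + x3 ^ 2 + x4 ^ 2 + x5 ^ 2 = 0)
    (hres : x1 * p1 + x2 * p2 + x3 * p3 + x4 * p4 + x5 * p5 = 0) :
    (-(x4 + Complex.I * x5) * p1 + x1 * (p4 + Complex.I * p5)) ^ 2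
      + (-(x4 + Complex.I * x5) * p2 + x2 * (p4 + Complex.I * p5)) ^ 2
      + (-(x4 + Complex.I * x5) * p3 + x3 * (p4 + Complex.I * p5)) ^ 2
      = (x4 + Complex.I * x5) ^ 2
        * (p1 ^ 2 + p2 ^ 2 + p3 ^ 2 + p4 ^ 2 + p5 ^ 2) := by
  have hI : Complex.I ^ 2 = -1 := Complex.I_sq
  linear_combination (p4 + Complex.I * p5) ^ 2 * hcone
    - 2 * (x4 + Complex.I * x5) * (p4 + Complex.I * p5) * hres
    + ((x4 * p5 - x5 * p4) ^ 2 + (x5 ^ 2 * p5 ^ 2 - x4 ^ 2 * p4 ^ 2) + (4 * x4 * x5 * p4 * p5 + x4 ^ 2 * p4 ^ 2 - 2 * x4 ^ 2 * p5 ^ 2 - 2 * x5 ^ 2 * p4 ^ 2 - x5 ^ 2 * p5 ^ 2)) * hI
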